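/- In the 3-dimensional model, axiom I4 holds: for any three pairwise intersecting lines of the model there exists a fourth line meeting all three in three distinct points. In particular: (i) any vertical line a_k intersects every five-point line; (ii) for two five-point lines p, q and a vertical line a, the five-point line through p ∩ b and q ∩ c (for suitable distinct vertical lines b, c different from a) meets a in a third distinct point. -/

import Mathlib

open Real

noncomputable section

/-- The vertices of the regular pentagon in the horizontal plane of `ℝ³`. -/
def pentagonPt (k : Fin 5) : Fin 3 → ℝ :=
  ![Real.cos (2 * π * (k.val : ℝ) / 5), Real.sin (2 * π * (k.val : ℝ) / 5), 0]

/-- The vertical unit direction. -/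
def e3 : Fin 3 → ℝ := ![0, 0, 1]

/-- The vertical line of the model over the `k`-th pentagon vertex. -/
def vertLine (k : Fin 5) : Set (Fin 3 → ℝ) := {x | ∃ t : ℝ, x = pentagonPt k + t • e3}

/-- The points of the model: the union of the five vertical lines. -/
def ModelPoints : Set (Fin 3 → ℝ) := ⋃ k, vertLine k

/-- Euclidean dot product in `ℝ³`. -/
def dot (n x : Fin 3 → ℝ) : ℝ := n 0 * x 0 + n 1 * x 1 + n 2 * x 2

/-- A five-point line of the model: the trace on the model points of a plane through the
origin with non-horizontal normal (such a plane contains no vertical line). -/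
def IsFivePointLine (l : Set (Fin 3 → ℝ)) : Prop :=
  ∃ n : Fin 3 → ℝ, n 2 ≠ 0 ∧ l = {x ∈ ModelPoints | dot n x = 0}

/-- A line of the model: a vertical line or a five-point line. -/
def IsModelLine (l : Set (Fin 3 → ℝ)) : Prop :=
  (∃ k, l = vertLine k) ∨ IsFivePointLine l
namespace ModelI4

def th (k : Fin 5) : ℝ := 2 * π * (k.val : ℝ) / 5

def pt (k : Fin 5) (t : ℝ) : Fin 3 → ℝ := ![Real.cos (th k), Real.sin (th k), t]

lemma pt_eq (k : Fin 5) (t : ℝ) : pentagonPt k + t • e3 = pt k t := by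
  funext i; fin_cases i <;>
    simp [pentagonPt, e3, pt, th, Pi.add_apply, Pi.smul_apply]

lemma mem_vertLine (k : Fin 5) (x : Fin 3 → ℝ) : x ∈ vertLine k ↔ ∃ t, x = pt k t := by
  simp [vertLine, pt_eq]

lemma pt_mem_vert (k : Fin 5) (t : ℝ) : pt k t ∈ vertLine k :=
  (mem_vertLine k _).mpr ⟨t, rfl⟩

lemma pt_mem_model (k : Fin 5) (t : ℝ) : pt k t ∈ ModelPoints :=
  Set.mem_iUnion.mpr ⟨k, pt_mem_vert k t⟩

lemma mem_model (x : Fin 3 → ℝ) : x ∈ ModelPoints ↔ ∃ k t, x = pt k t := by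
  simp [ModelPoints, mem_vertLine]

lemma cos_sin_inj {j k : Fin 5} (hc : Real.cos (th j) = Real.cos (th k))
    (hs : Real.sin (th j) = Real.sin (th k)) : j = k := by
  have hj : (j.val : ℝ) < 5 := by exact_mod_cast j.is_lt
  have hk : (k.val : ℝ) < 5 := by exact_mod_cast k.is_lt
  have hj0 : (0:ℝ) ≤ (j.val : ℝ) := Nat.cast_nonneg _
  have hk0 : (0:ℝ) ≤ (k.val : ℝ) := Nat.cast_nonneg _
  have hπ := Real.pi_pos
  have h1 : Real.cos (th j - th k) = 1 := by
    rw [Real.cos_sub, hc, hs]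
    nlinarith [Real.sin_sq_add_cos_sq (th k)]
  have hlt1 : -(2 * π) < th j - th k := by unfold th; nlinarith
  have hlt2 : th j - th k < 2 * π := by unfold th; nlinarith
  have h0 : th j - th k = 0 := (Real.cos_eq_one_iff_of_lt_of_lt hlt1 hlt2).mp h1
  have h' : π * ((j.val : ℝ) - (k.val : ℝ)) = 0 := by
    unfold th at h0; linear_combination (5/2 : ℝ) * h0
  rcases mul_eq_zero.mp h' with h | h
  · exact absurd h Real.pi_ne_zero
  · have : (j.val : ℝ) = (k.val : ℝ) := by linarith
    exact Fin.ext (by exact_mod_cast this)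

lemma pt_inj {j k : Fin 5} {t s : ℝ} (h : pt j t = pt k s) : j = k ∧ t = s := by
  have h0 := congrFun h 0
  have h1 := congrFun h 1
  have h2 := congrFun h 2
  simp [pt] at h0 h1 h2
  exact ⟨cos_sin_inj h0 h1, h2⟩

lemma vert_eq {j k : Fin 5} (h : (vertLine j ∩ vertLine k).Nonempty) : j = k := by
  obtain ⟨x, hx1, hx2⟩ := h
  rw [mem_vertLine] at hx1 hx2
  obtain ⟨t, rfl⟩ := hx1
  obtain ⟨s, hs⟩ := hx2
  exact (pt_inj hs).1

def planeLine (a b : ℝ) : Set (Fin 3 → ℝ) := {x ∈ ModelPoints | dot ![a, b, 1] x = 0}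

def hgt (a b : ℝ) (k : Fin 5) : ℝ := -(a * Real.cos (th k) + b * Real.sin (th k))

lemma dot_pt (n : Fin 3 → ℝ) (k : Fin 5) (t : ℝ) :
    dot n (pt k t) = n 0 * Real.cos (th k) + n 1 * Real.sin (th k) + n 2 * t := by
  simp [dot, pt]

lemma mem_planeLine (a b : ℝ) (x : Fin 3 → ℝ) :
    x ∈ planeLine a b ↔ ∃ k, x = pt k (hgt a b k) := by
  constructor
  · rintro ⟨hm, hd⟩
    obtain ⟨k, t, rfl⟩ := (mem_model x).mp hm
    rw [dot_pt] at hd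
    refine ⟨k, ?_⟩
    have : t = hgt a b k := by simp at hd; unfold hgt; linarith
    rw [this]
  · rintro ⟨k, rfl⟩
    refine ⟨pt_mem_model k _, ?_⟩
    rw [dot_pt]; unfold hgt; simp

lemma fpt_mem (a b : ℝ) (k : Fin 5) : pt k (hgt a b k) ∈ planeLine a b :=
  (mem_planeLine a b _).mpr ⟨k, rfl⟩

lemma isFive_planeLine (a b : ℝ) : IsFivePointLine (planeLine a b) :=
  ⟨![a, b, 1], by simp [Matrix.cons_val_two, Matrix.tail_cons], rfl⟩

lemma isModel_planeLine (a b : ℝ) : IsModelLine (planeLine a b) :=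
  Or.inr (isFive_planeLine a b)

lemma five_eq_plane {l : Set (Fin 3 → ℝ)} (h : IsFivePointLine l) :
    ∃ a b, l = planeLine a b := by
  obtain ⟨n, hn2, rfl⟩ := h
  refine ⟨n 0 / n 2, n 1 / n 2, ?_⟩
  ext x
  have key : dot ![n 0 / n 2, n 1 / n 2, 1] x = dot n x / n 2 := by
    simp [dot]; field_simp
  simp only [planeLine, Set.mem_setOf_eq, key, div_eq_zero_iff]
  tauto





lemma sin_th_sub_ne {m m' : Fin 5} (h : m ≠ m') : Real.sin (th m' - th m) ≠ 0 := by
  intro h0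
  rw [Real.sin_eq_zero_iff] at h0
  obtain ⟨n, hn⟩ := h0
  have hπ := Real.pi_ne_zero
  have h5 : (5 * n : ℝ) * π = (2 * (m'.val : ℝ) - 2 * (m.val : ℝ)) * π := by
    unfold th at hn; linear_combination 5 * hn
  have h5' : (5 * n : ℝ) = 2 * (m'.val : ℝ) - 2 * (m.val : ℝ) :=
    mul_right_cancel₀ hπ h5
  have hz : (5 * n : ℤ) = 2 * (m'.val : ℤ) - 2 * (m.val : ℤ) := by exact_mod_cast h5'
  have hm : m.val < 5 := m.is_lt
  have hm' : m'.val < 5 := m'.is_lt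
  have hne : m.val ≠ m'.val := fun hv => h (Fin.ext hv)
  omega

lemma det_ne {m m' : Fin 5} (h : m ≠ m') :
    Real.cos (th m) * Real.sin (th m') - Real.sin (th m) * Real.cos (th m') ≠ 0 := by
  have := sin_th_sub_ne h
  rw [Real.sin_sub] at this
  intro hc; apply this; linarith

lemma exists_plane_through {m m' : Fin 5} (hne : m ≠ m') (h h' : ℝ) :
    ∃ a b, hgt a b m = h ∧ hgt a b m' = h' := by
  set cm := Real.cos (th m); set sm := Real.sin (th m)
  set cm' := Real.cos (th m'); set sm' := Real.sin (th m')
  have hD : cm * sm' - sm * cm' ≠ 0 := det_ne hne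
  refine ⟨(-h * sm' + h' * sm) / (cm * sm' - sm * cm'),
          (h * cm' - h' * cm) / (cm * sm' - sm * cm'), ?_, ?_⟩ <;>
    · unfold hgt; simp only [cm, sm, cm', sm'] at hD ⊢
      rw [div_mul_eq_mul_div, div_mul_eq_mul_div, ← add_div, ← neg_div, div_eq_iff hD]; ring

lemma param_eq_of_two {m m' : Fin 5} {a b a' b' : ℝ} (hne : m ≠ m')
    (h1 : hgt a b m = hgt a' b' m) (h2 : hgt a b m' = hgt a' b' m') :
    a = a' ∧ b = b' := by
  set cm := Real.cos (th m); set sm := Real.sin (th m)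
  set cm' := Real.cos (th m'); set sm' := Real.sin (th m')
  have hD : cm * sm' - sm * cm' ≠ 0 := det_ne hne
  have e1 : a * cm + b * sm = a' * cm + b' * sm := by
    unfold hgt at h1; linarith
  have e2 : a * cm' + b * sm' = a' * cm' + b' * sm' := by
    unfold hgt at h2; linarith
  have hu : (a - a') * (cm * sm' - sm * cm') = 0 := by linear_combination sm' * e1 - sm * e2
  have hv : (b - b') * (cm * sm' - sm * cm') = 0 := by linear_combination cm * e2 - cm' * e1
  constructor
  · rcases mul_eq_zero.mp hu with h | h
    · linarith
    · exact absurd h hD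
  · rcases mul_eq_zero.mp hv with h | h
    · linarith
    · exact absurd h hD

lemma planes_eq {a b a' b' : ℝ} (ha : a = a') (hb : b = b') :
    planeLine a b = planeLine a' b' := by rw [ha, hb]

lemma fact1 : ∀ k : Fin 5, ∃ m m' : Fin 5, k ≠ m ∧ k ≠ m' ∧ m ≠ m' := by decide

lemma fact2 : ∀ x y z : Fin 5, ∃ m : Fin 5, m ≠ x ∧ m ≠ y ∧ m ≠ z := by decide

def Good (l₁ l₂ l₃ : Set (Fin 3 → ℝ)) : Prop :=
  ∃ d : Set (Fin 3 → ℝ), IsModelLine d ∧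
    ∃ A B C : Fin 3 → ℝ, A ≠ B ∧ B ≠ C ∧ A ≠ C ∧
      A ∈ d ∧ A ∈ l₁ ∧ B ∈ d ∧ B ∈ l₂ ∧ C ∈ d ∧ C ∈ l₃

lemma good_swap12 {l₁ l₂ l₃ : Set (Fin 3 → ℝ)} (h : Good l₁ l₂ l₃) : Good l₂ l₁ l₃ := by
  obtain ⟨d, hd, A, B, C, hAB, hBC, hAC, h1, h2, h3, h4, h5, h6⟩ := h
  exact ⟨d, hd, B, A, C, Ne.symm hAB, hAC, hBC, h3, h4, h1, h2, h5, h6⟩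

lemma good_swap23 {l₁ l₂ l₃ : Set (Fin 3 → ℝ)} (h : Good l₁ l₂ l₃) : Good l₁ l₃ l₂ := by
  obtain ⟨d, hd, A, B, C, hAB, hBC, hAC, h1, h2, h3, h4, h5, h6⟩ := h
  exact ⟨d, hd, A, C, B, hAC, Ne.symm hBC, hAB, h1, h2, h5, h6, h3, h4⟩

lemma pt_ne_of_t {k : Fin 5} {t s : ℝ} (h : t ≠ s) : pt k t ≠ pt k s :=
  fun he => h (pt_inj he).2

lemma pt_ne_of_k {j k : Fin 5} {t s : ℝ} (h : j ≠ k) : pt j t ≠ pt k s :=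
  fun he => h (pt_inj he).1

lemma good_VVV (k : Fin 5) : Good (vertLine k) (vertLine k) (vertLine k) := by
  refine ⟨vertLine k, Or.inl ⟨k, rfl⟩, pt k 0, pt k 1, pt k 2,
    pt_ne_of_t (by norm_num), pt_ne_of_t (by norm_num), pt_ne_of_t (by norm_num),
    pt_mem_vert k 0, pt_mem_vert k 0, pt_mem_vert k 1, pt_mem_vert k 1,
    pt_mem_vert k 2, pt_mem_vert k 2⟩

lemma good_VVF (k : Fin 5) (a b : ℝ) :
    Good (vertLine k) (vertLine k) (planeLine a b) := by
  refine ⟨vertLine k, Or.inl ⟨k, rfl⟩,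
    pt k (hgt a b k + 1), pt k (hgt a b k + 2), pt k (hgt a b k),
    pt_ne_of_t (by norm_num), pt_ne_of_t (by norm_num), pt_ne_of_t (by norm_num),
    pt_mem_vert k _, pt_mem_vert k _, pt_mem_vert k _, pt_mem_vert k _,
    pt_mem_vert k _, fpt_mem a b k⟩

lemma good_VFF (k : Fin 5) (a₂ b₂ a₃ b₃ : ℝ) :
    Good (vertLine k) (planeLine a₂ b₂) (planeLine a₃ b₃) := by
  obtain ⟨m, m', hkm, hkm', hmm'⟩ := fact1 k
  obtain ⟨a, b, hm, hm'⟩ := exists_plane_through hmm' (hgt a₂ b₂ m) (hgt a₃ b₃ m')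
  refine ⟨planeLine a b, isModel_planeLine a b,
    pt k (hgt a b k), pt m (hgt a₂ b₂ m), pt m' (hgt a₃ b₃ m'),
    pt_ne_of_k hkm, pt_ne_of_k hmm', pt_ne_of_k hkm',
    fpt_mem a b k, pt_mem_vert k _, ?_, fpt_mem a₂ b₂ m, ?_, fpt_mem a₃ b₃ m'⟩
  · rw [← hm]; exact fpt_mem a b m
  · rw [← hm']; exact fpt_mem a b m'

/-- the repeated-line helper: `l` a five-point line, `P ∈ l` at vertex `j`;
produce two further points of `l`. -/
lemma good_FFF_eq12 (a b a₃ b₃ : ℝ)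
    (h13 : (planeLine a b ∩ planeLine a₃ b₃).Nonempty) :
    Good (planeLine a b) (planeLine a b) (planeLine a₃ b₃) := by
  obtain ⟨P, hP1, hP3⟩ := h13
  obtain ⟨j, rfl⟩ := (mem_planeLine a b P).mp hP1
  obtain ⟨m, m', hjm, hjm', hmm'⟩ := fact1 j
  exact ⟨planeLine a b, isModel_planeLine a b,
    pt m (hgt a b m), pt m' (hgt a b m'), pt j (hgt a b j),
    pt_ne_of_k hmm', pt_ne_of_k (Ne.symm hjm'), pt_ne_of_k (Ne.symm hjm),
    fpt_mem a b m, fpt_mem a b m, fpt_mem a b m', fpt_mem a b m', hP1, hP3⟩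

lemma good_FFF (a₁ b₁ a₂ b₂ a₃ b₃ : ℝ)
    (h12 : (planeLine a₁ b₁ ∩ planeLine a₂ b₂).Nonempty)
    (h23 : (planeLine a₂ b₂ ∩ planeLine a₃ b₃).Nonempty)
    (h13 : (planeLine a₁ b₁ ∩ planeLine a₃ b₃).Nonempty) :
    Good (planeLine a₁ b₁) (planeLine a₂ b₂) (planeLine a₃ b₃) := by
  by_cases e12 : a₁ = a₂ ∧ b₁ = b₂
  · rw [← planes_eq e12.1 e12.2]
    exact good_FFF_eq12 a₁ b₁ a₃ b₃ h13
  by_cases e23 : a₂ = a₃ ∧ b₂ = b₃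
  · rw [← planes_eq e23.1 e23.2]
    exact good_swap12 (good_swap23 (good_FFF_eq12 a₂ b₂ a₁ b₁
      (Set.inter_comm _ _ ▸ h12)))
  by_cases e13 : a₁ = a₃ ∧ b₁ = b₃
  · rw [← planes_eq e13.1 e13.2]
    exact good_swap23 (good_FFF_eq12 a₁ b₁ a₂ b₂ h12)
  · -- all three planes distinct: use a vertical transversal
    classical
    -- bad vertices
    have bad : ∀ (a b a' b' : ℝ), ¬(a = a' ∧ b = b') →
        ∀ x y : Fin 5, hgt a b x = hgt a' b' x → hgt a b y = hgt a' b' y → x = y := by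
      intro a b a' b' hne x y hx hy
      by_contra hxy
      exact hne (param_eq_of_two hxy hx hy)
    obtain ⟨x, hx⟩ : ∃ x : Fin 5, ∀ j, hgt a₁ b₁ j = hgt a₂ b₂ j → j = x := by
      by_cases h : ∃ j, hgt a₁ b₁ j = hgt a₂ b₂ j
      · obtain ⟨j, hj⟩ := h
        exact ⟨j, fun j' hj' => bad a₁ b₁ a₂ b₂ e12 j' j hj' hj⟩
      · exact ⟨0, fun j hj => absurd ⟨j, hj⟩ h⟩
    obtain ⟨y, hy⟩ : ∃ y : Fin 5, ∀ j, hgt a₂ b₂ j = hgt a₃ b₃ j → j = y := by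
      by_cases h : ∃ j, hgt a₂ b₂ j = hgt a₃ b₃ j
      · obtain ⟨j, hj⟩ := h
        exact ⟨j, fun j' hj' => bad a₂ b₂ a₃ b₃ e23 j' j hj' hj⟩
      · exact ⟨0, fun j hj => absurd ⟨j, hj⟩ h⟩
    obtain ⟨z, hz⟩ : ∃ z : Fin 5, ∀ j, hgt a₁ b₁ j = hgt a₃ b₃ j → j = z := by
      by_cases h : ∃ j, hgt a₁ b₁ j = hgt a₃ b₃ j
      · obtain ⟨j, hj⟩ := h
        exact ⟨j, fun j' hj' => bad a₁ b₁ a₃ b₃ e13 j' j hj' hj⟩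
      · exact ⟨0, fun j hj => absurd ⟨j, hj⟩ h⟩
    obtain ⟨m, hmx, hmy, hmz⟩ := fact2 x y z
    refine ⟨vertLine m, Or.inl ⟨m, rfl⟩,
      pt m (hgt a₁ b₁ m), pt m (hgt a₂ b₂ m), pt m (hgt a₃ b₃ m),
      pt_ne_of_t (fun h => hmx (hx m h)), pt_ne_of_t (fun h => hmy (hy m h)),
      pt_ne_of_t (fun h => hmz (hz m h)),
      pt_mem_vert m _, fpt_mem a₁ b₁ m, pt_mem_vert m _, fpt_mem a₂ b₂ m,
      pt_mem_vert m _, fpt_mem a₃ b₃ m⟩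

lemma part1 (k : Fin 5) (l : Set (Fin 3 → ℝ)) (hl : IsFivePointLine l) :
    (vertLine k ∩ l).Nonempty := by
  obtain ⟨a, b, rfl⟩ := five_eq_plane hl
  exact ⟨pt k (hgt a b k), pt_mem_vert k _, fpt_mem a b k⟩

lemma part2 (l₁ l₂ l₃ : Set (Fin 3 → ℝ))
    (h1 : IsModelLine l₁) (h2 : IsModelLine l₂) (h3 : IsModelLine l₃)
    (h12 : (l₁ ∩ l₂).Nonempty) (h23 : (l₂ ∩ l₃).Nonempty)
    (h13 : (l₁ ∩ l₃).Nonempty) : Good l₁ l₂ l₃ := by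
  rcases h1 with ⟨k₁, rfl⟩ | h1 <;> [skip; obtain ⟨a₁, b₁, rfl⟩ := five_eq_plane h1] <;>
  (rcases h2 with ⟨k₂, rfl⟩ | h2 <;> [skip; obtain ⟨a₂, b₂, rfl⟩ := five_eq_plane h2]) <;>
  (rcases h3 with ⟨k₃, rfl⟩ | h3 <;> [skip; obtain ⟨a₃, b₃, rfl⟩ := five_eq_plane h3])
  · -- V V V
    obtain rfl := vert_eq h12
    obtain rfl := vert_eq h23
    exact good_VVV k₁
  · -- V V F
    obtain rfl := vert_eq h12
    exact good_VVF k₁ a₃ b₃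
  · -- V F V
    obtain rfl := vert_eq h13
    exact good_swap23 (good_VVF k₁ a₂ b₂)
  · -- V F F
    exact good_VFF k₁ a₂ b₂ a₃ b₃
  · -- F V V
    obtain rfl := vert_eq h23
    exact good_swap12 (good_swap23 (good_VVF k₂ a₁ b₁))
  · -- F V F
    exact good_swap12 (good_VFF k₂ a₁ b₁ a₃ b₃)
  · -- F F V
    exact good_swap23 (good_swap12 (good_VFF k₃ a₁ b₁ a₂ b₂))
  · -- F F F
    exact good_FFF a₁ b₁ a₂ b₂ a₃ b₃ h12 h23 h13

end ModelI4

/-- Axiom I4 in the model: every vertical line meets every five-point line, and for any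
three pairwise intersecting lines of the model there is a fourth line meeting all three
in three distinct points. -/


theorem model_I4 :
    (∀ k : Fin 5, ∀ l : Set (Fin 3 → ℝ), IsFivePointLine l → (vertLine k ∩ l).Nonempty) ∧
    (∀ l₁ l₂ l₃ : Set (Fin 3 → ℝ),
      IsModelLine l₁ → IsModelLine l₂ → IsModelLine l₃ →
      (l₁ ∩ l₂).Nonempty → (l₂ ∩ l₃).Nonempty → (l₁ ∩ l₃).Nonempty →
      ∃ d : Set (Fin 3 → ℝ), IsModelLine d ∧
        ∃ A B C : Fin 3 → ℝ, A ≠ B ∧ B ≠ C ∧ A ≠ C ∧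
          A ∈ d ∧ A ∈ l₁ ∧ B ∈ d ∧ B ∈ l₂ ∧ C ∈ d ∧ C ∈ l₃) := by
  exact ⟨ModelI4.part1, ModelI4.part2⟩

end
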